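/- Let λ, μ ∈ ℝ satisfy μ > 0 and 3λ + 2μ > 0, and let ω = (ω₁, ω₂, 0) be a unit vector. Then for every Σ ∈ ℂ, det(Σ I₆ − K⁰) = (1 + Σ²)³, where I₆ is the 6×6 identity matrix. Consequently the eigenvalues of K⁰ are exactly i and −i, each with algebraic multiplicity 3. -/

import Mathlib

open Matrix

noncomputable section

/-- Isotropic elasticity tensor `C_{ijkl} = λ δ_{ij} δ_{kl} + μ (δ_{ik} δ_{jl} + δ_{il} δ_{jk})`. -/
def isoC (lam mu : ℝ) (i j k l : Fin 3) : ℝ :=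
  lam * (if i = j then (1:ℝ) else 0) * (if k = l then (1:ℝ) else 0)
    + mu * ((if i = k then (1:ℝ) else 0) * (if j = l then (1:ℝ) else 0)
      + (if i = l then (1:ℝ) else 0) * (if j = k then (1:ℝ) else 0))

/-- The matrix `⟨ξ,ζ⟩` with entries `⟨ξ,ζ⟩_{ik} = Σ_{j,l} C_{ijkl} ξ_j ζ_l`. -/
def bil (lam mu : ℝ) (ξ ζ : Fin 3 → ℝ) : Matrix (Fin 3) (Fin 3) ℝ :=
  Matrix.of fun i k => ∑ j, ∑ l, isoC lam mu i j k l * ξ j * ζ l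

/-- `M₀ = ⟨e₃,e₃⟩`. -/
def Mat0 (lam mu : ℝ) : Matrix (Fin 3) (Fin 3) ℝ := bil lam mu ![0,0,1] ![0,0,1]

/-- `M₁ = ⟨e₃,ω⟩ + ⟨ω,e₃⟩` for `ω = (ω₁,ω₂,0)`. -/
def Mat1 (lam mu ω1 ω2 : ℝ) : Matrix (Fin 3) (Fin 3) ℝ :=
  bil lam mu ![0,0,1] ![ω1,ω2,0] + bil lam mu ![ω1,ω2,0] ![0,0,1]

/-- `M₂ = ⟨ω,ω⟩`. -/
def Mat2 (lam mu ω1 ω2 : ℝ) : Matrix (Fin 3) (Fin 3) ℝ :=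
  bil lam mu ![ω1,ω2,0] ![ω1,ω2,0]

/-- `⟨e₃,ω⟩`. -/
def E3w (lam mu ω1 ω2 : ℝ) : Matrix (Fin 3) (Fin 3) ℝ := bil lam mu ![0,0,1] ![ω1,ω2,0]

/-- `⟨ω,e₃⟩`. -/
def wE3 (lam mu ω1 ω2 : ℝ) : Matrix (Fin 3) (Fin 3) ℝ := bil lam mu ![ω1,ω2,0] ![0,0,1]

/-- The 6×6 Stroh matrix
`K⁰ = [[−M₀⁻¹⟨e₃,ω⟩, −M₀⁻¹], [M₂ − ⟨ω,e₃⟩M₀⁻¹⟨e₃,ω⟩, −⟨ω,e₃⟩M₀⁻¹]]`. -/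
def Stroh (lam mu ω1 ω2 : ℝ) : Matrix (Fin 6) (Fin 6) ℝ :=
  Matrix.reindex finSumFinEquiv finSumFinEquiv
    (Matrix.fromBlocks
      (-((Mat0 lam mu)⁻¹ * E3w lam mu ω1 ω2)) (-(Mat0 lam mu)⁻¹)
      (Mat2 lam mu ω1 ω2 - wE3 lam mu ω1 ω2 * (Mat0 lam mu)⁻¹ * E3w lam mu ω1 ω2)
      (-(wE3 lam mu ω1 ω2 * (Mat0 lam mu)⁻¹)))

/-- Complex versions (real matrices regarded as complex matrices). -/
def Mat0c (lam mu : ℝ) : Matrix (Fin 3) (Fin 3) ℂ := (Mat0 lam mu).map Complex.ofReal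

def Mat1c (lam mu ω1 ω2 : ℝ) : Matrix (Fin 3) (Fin 3) ℂ := (Mat1 lam mu ω1 ω2).map Complex.ofReal

def Mat2c (lam mu ω1 ω2 : ℝ) : Matrix (Fin 3) (Fin 3) ℂ := (Mat2 lam mu ω1 ω2).map Complex.ofReal

def E3wc (lam mu ω1 ω2 : ℝ) : Matrix (Fin 3) (Fin 3) ℂ := (E3w lam mu ω1 ω2).map Complex.ofReal

def Strohc (lam mu ω1 ω2 : ℝ) : Matrix (Fin 6) (Fin 6) ℂ := (Stroh lam mu ω1 ω2).map Complex.ofReal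

end

section FinHelpers

lemma cs10 : Fin.castSucc (0 : Fin 1) = (0 : Fin 2) := rfl
lemma cs20 : Fin.castSucc (0 : Fin 2) = (0 : Fin 3) := rfl
lemma cs21 : Fin.castSucc (1 : Fin 2) = (1 : Fin 3) := rfl
lemma cs30 : Fin.castSucc (0 : Fin 3) = (0 : Fin 4) := rfl
lemma cs31 : Fin.castSucc (1 : Fin 3) = (1 : Fin 4) := rfl
lemma cs32 : Fin.castSucc (2 : Fin 3) = (2 : Fin 4) := rfl
lemma cs40 : Fin.castSucc (0 : Fin 4) = (0 : Fin 5) := rfl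
lemma cs41 : Fin.castSucc (1 : Fin 4) = (1 : Fin 5) := rfl
lemma cs42 : Fin.castSucc (2 : Fin 4) = (2 : Fin 5) := rfl
lemma cs43 : Fin.castSucc (3 : Fin 4) = (3 : Fin 5) := rfl
lemma cs50 : Fin.castSucc (0 : Fin 5) = (0 : Fin 6) := rfl
lemma cs51 : Fin.castSucc (1 : Fin 5) = (1 : Fin 6) := rfl
lemma cs52 : Fin.castSucc (2 : Fin 5) = (2 : Fin 6) := rfl
lemma cs53 : Fin.castSucc (3 : Fin 5) = (3 : Fin 6) := rfl
lemma cs54 : Fin.castSucc (4 : Fin 5) = (4 : Fin 6) := rfl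

lemma v0 {α : Type*} (a b c d e f : α) : ![a,b,c,d,e,f] 0 = a := rfl
lemma v1 {α : Type*} (a b c d e f : α) : ![a,b,c,d,e,f] 1 = b := rfl
lemma v2 {α : Type*} (a b c d e f : α) : ![a,b,c,d,e,f] 2 = c := rfl
lemma v3 {α : Type*} (a b c d e f : α) : ![a,b,c,d,e,f] 3 = d := rfl
lemma v5 {α : Type*} (a b c d e f : α) : ![a,b,c,d,e,f] 5 = f := rfl
lemma v4 {α : Type*} (a b c d e f : α) : ![a,b,c,d,e,f] 4 = e := rfl

end FinHelpers

lemma reindex_fromBlocks_six {α : Type*} (A B C D : Matrix (Fin 3) (Fin 3) α) :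
    Matrix.reindex finSumFinEquiv finSumFinEquiv (Matrix.fromBlocks A B C D) =
    Matrix.of ![![A 0 0, A 0 1, A 0 2, B 0 0, B 0 1, B 0 2],
       ![A 1 0, A 1 1, A 1 2, B 1 0, B 1 1, B 1 2],
       ![A 2 0, A 2 1, A 2 2, B 2 0, B 2 1, B 2 2],
       ![C 0 0, C 0 1, C 0 2, D 0 0, D 0 1, D 0 2],
       ![C 1 0, C 1 1, C 1 2, D 1 0, D 1 1, D 1 2],
       ![C 2 0, C 2 1, C 2 2, D 2 0, D 2 1, D 2 2]] := by
  ext i j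
  fin_cases i <;> fin_cases j <;> rfl

section Aux
variable (lam mu ω1 ω2 : ℝ)

lemma Mat0_eq : Mat0 lam mu = !![mu,0,0;0,mu,0;0,0,lam+2*mu] := by
  ext i j
  fin_cases i <;> fin_cases j <;>
    simp [Mat0, bil, isoC, Fin.sum_univ_three] <;> ring

lemma E3w_eq : E3w lam mu ω1 ω2 = !![0,0,mu*ω1;0,0,mu*ω2;lam*ω1,lam*ω2,0] := by
  ext i j
  fin_cases i <;> fin_cases j <;>
    simp [E3w, bil, isoC, Fin.sum_univ_three] <;> ring

lemma wE3_eq : wE3 lam mu ω1 ω2 = !![0,0,lam*ω1;0,0,lam*ω2;mu*ω1,mu*ω2,0] := by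
  ext i j
  fin_cases i <;> fin_cases j <;>
    simp [wE3, bil, isoC, Fin.sum_univ_three] <;> ring

lemma Mat2_eq : Mat2 lam mu ω1 ω2 =
    !![(lam+mu)*ω1^2+mu*(ω1^2+ω2^2),(lam+mu)*ω1*ω2,0;
       (lam+mu)*ω1*ω2,(lam+mu)*ω2^2+mu*(ω1^2+ω2^2),0;
       0,0,mu*(ω1^2+ω2^2)] := by
  ext i j
  fin_cases i <;> fin_cases j <;>
    simp [Mat2, bil, isoC, Fin.sum_univ_three] <;> ring

lemma Mat0_inv (hm : mu ≠ 0) (ha : lam + 2*mu ≠ 0) :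
    (Mat0 lam mu)⁻¹ = !![mu⁻¹,0,0;0,mu⁻¹,0;0,0,(lam+2*mu)⁻¹] := by
  apply Matrix.inv_eq_right_inv
  rw [Mat0_eq]
  ext i j
  fin_cases i <;> fin_cases j <;>
    norm_num [Matrix.mul_apply, Fin.sum_univ_succ, Matrix.one_apply, Fin.ext_iff,
      Matrix.cons_val] <;>
    field_simp

set_option maxHeartbeats 1600000 in
lemma blockTL (hm : mu ≠ 0) (ha : lam + 2*mu ≠ 0) :
    -((Mat0 lam mu)⁻¹ * E3w lam mu ω1 ω2) =
      !![0,0,-ω1;0,0,-ω2;-(lam/(lam+2*mu))*ω1,-(lam/(lam+2*mu))*ω2,0] := by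
  rw [Mat0_inv lam mu hm ha, E3w_eq]
  ext i j
  fin_cases i <;> fin_cases j <;>
    norm_num [Matrix.mul_apply, Fin.sum_univ_succ, Matrix.cons_val] <;>
    field_simp <;> ring

set_option maxHeartbeats 1600000 in
lemma blockTR (hm : mu ≠ 0) (ha : lam + 2*mu ≠ 0) :
    -(Mat0 lam mu)⁻¹ = !![-mu⁻¹,0,0;0,-mu⁻¹,0;0,0,-(lam+2*mu)⁻¹] := by
  rw [Mat0_inv lam mu hm ha]
  ext i j
  fin_cases i <;> fin_cases j <;> norm_num [Matrix.vecHead, Matrix.vecTail]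

set_option maxHeartbeats 1600000 in
lemma blockBR (hm : mu ≠ 0) (ha : lam + 2*mu ≠ 0) :
    -(wE3 lam mu ω1 ω2 * (Mat0 lam mu)⁻¹) =
      !![0,0,-(lam/(lam+2*mu))*ω1;0,0,-(lam/(lam+2*mu))*ω2;-ω1,-ω2,0] := by
  rw [Mat0_inv lam mu hm ha, wE3_eq]
  ext i j
  fin_cases i <;> fin_cases j <;>
    norm_num [Matrix.mul_apply, Fin.sum_univ_succ, Matrix.cons_val] <;>
    field_simp <;> ring

set_option maxHeartbeats 1600000 in
lemma blockBL (hm : mu ≠ 0) (ha : lam + 2*mu ≠ 0) :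
    Mat2 lam mu ω1 ω2 - wE3 lam mu ω1 ω2 * (Mat0 lam mu)⁻¹ * E3w lam mu ω1 ω2 =
      !![(lam+mu)*ω1^2+mu*(ω1^2+ω2^2) - (lam^2/(lam+2*mu))*ω1^2,
         (lam+mu)*ω1*ω2 - (lam^2/(lam+2*mu))*(ω1*ω2), 0;
         (lam+mu)*ω1*ω2 - (lam^2/(lam+2*mu))*(ω1*ω2),
         (lam+mu)*ω2^2+mu*(ω1^2+ω2^2) - (lam^2/(lam+2*mu))*ω2^2, 0;
         0,0,0] := by
  rw [Mat0_inv lam mu hm ha, wE3_eq, E3w_eq, Mat2_eq]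
  ext i j
  fin_cases i <;> fin_cases j <;>
    norm_num [Matrix.mul_apply, Fin.sum_univ_succ, Matrix.sub_apply,
      Matrix.cons_val] <;>
    field_simp <;> ring

end Aux

set_option maxHeartbeats 4000000 in
set_option maxRecDepth 100000 in
lemma det_pattern (z1 z2 z3 z4 z5 z6 a b b2 c d d2 e e2 f g h h2 p q r : ℂ) :
    Matrix.det (Matrix.of ![![z1,0,a, b,0,0],
       ![0,z2,c, 0,b2,0],
       ![d, e, z3, 0,0,f],
       ![g, h, 0, z4,0,d2],
       ![h2, p, 0, 0,z5,e2],
       ![0,0,0, q,r,z6]]) =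
    z1 * (z2 * (z3 * (z4 * (z5 * (z6)-e2 * (r))+d2 * (-z5 * (q))))-c * (e * (z4 * (z5 * (z6)-e2 * (r))+d2 * (-z5 * (q)))-f * (h * (-z5 * (q))-z4 * (p * (r))))-b2 * (-z3 * (h * (-e2 * (q))-z4 * (p * (z6))+d2 * (p * (q)))))+a * (-z2 * (d * (z4 * (z5 * (z6)-e2 * (r))+d2 * (-z5 * (q)))-f * (g * (-z5 * (q))-z4 * (h2 * (r))))-b2 * (d * (h * (-e2 * (q))-z4 * (p * (z6))+d2 * (p * (q)))-e * (g * (-e2 * (q))-z4 * (h2 * (z6))+d2 * (h2 * (q)))-f * (g * (p * (q))-h * (h2 * (q)))))-b * (-z2 * (-z3 * (g * (z5 * (z6)-e2 * (r))+d2 * (h2 * (r))))+c * (d * (h * (z5 * (z6)-e2 * (r))+d2 * (p * (r)))-e * (g * (z5 * (z6)-e2 * (r))+d2 * (h2 * (r)))-f * (g * (p * (r))-h * (h2 * (r))))-b2 * (z3 * (g * (p * (z6))-h * (h2 * (z6))))) := by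
  simp [Matrix.det_succ_row_zero, Fin.sum_univ_succ, Fin.succAbove, Matrix.cons_val,
    cs10, cs20, cs21, cs30, cs31, cs32, cs40, cs41, cs42, cs43,
    cs50, cs51, cs52, cs53, cs54]
  ring

set_option maxHeartbeats 4000000 in
set_option maxRecDepth 100000 in
theorem keydet (lam mu ω1 ω2 : ℝ) (hm : mu ≠ 0) (ha : lam + 2*mu ≠ 0) (z : ℂ) :
    Matrix.det (z • (1 : Matrix (Fin 6) (Fin 6) ℂ) - Strohc lam mu ω1 ω2)
      = (((ω1:ℂ)^2 + (ω2:ℂ)^2) + z ^ 2) ^ 3 := by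
  have hmc : (mu:ℂ) ≠ 0 := by exact_mod_cast hm
  have hac : ((lam:ℂ) + 2*(mu:ℂ)) ≠ 0 := by
    intro h; apply ha; exact_mod_cast h
  have hS : Stroh lam mu ω1 ω2 =
    Matrix.of ![![0,0,-ω1, -mu⁻¹,0,0],
       ![0,0,-ω2, 0,-mu⁻¹,0],
       ![-(lam/(lam+2*mu))*ω1, -(lam/(lam+2*mu))*ω2, 0, 0,0,-(lam+2*mu)⁻¹],
       ![(lam+mu)*ω1^2+mu*(ω1^2+ω2^2) - (lam^2/(lam+2*mu))*ω1^2,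
         (lam+mu)*ω1*ω2 - (lam^2/(lam+2*mu))*(ω1*ω2), 0, 0,0,-(lam/(lam+2*mu))*ω1],
       ![(lam+mu)*ω1*ω2 - (lam^2/(lam+2*mu))*(ω1*ω2),
         (lam+mu)*ω2^2+mu*(ω1^2+ω2^2) - (lam^2/(lam+2*mu))*ω2^2, 0, 0,0,-(lam/(lam+2*mu))*ω2],
       ![0,0,0, -ω1,-ω2,0]] := by
    rw [Stroh, blockTL lam mu ω1 ω2 hm ha, blockTR lam mu hm ha,
      blockBL lam mu ω1 ω2 hm ha, blockBR lam mu ω1 ω2 hm ha, reindex_fromBlocks_six]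
    ext i j
    fin_cases i <;> fin_cases j <;> simp
  have hK : z • (1 : Matrix (Fin 6) (Fin 6) ℂ) - Strohc lam mu ω1 ω2 =
    (Matrix.diagonal ![(mu:ℂ)⁻¹,(mu:ℂ)⁻¹,((lam:ℂ)+2*mu)⁻¹,((lam:ℂ)+2*mu)⁻¹,((lam:ℂ)+2*mu)⁻¹,1]) *
    Matrix.of ![![(mu:ℂ)*z,0,(mu:ℂ)*ω1, 1,0,0],
       ![0,(mu:ℂ)*z,(mu:ℂ)*ω2, 0,1,0],
       ![(lam:ℂ)*ω1, (lam:ℂ)*ω2, ((lam:ℂ)+2*mu)*z, 0,0,1],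
       ![-(((lam:ℂ)+2*mu)*(((lam:ℂ)+mu)*ω1^2+(mu:ℂ)*((ω1:ℂ)^2+(ω2:ℂ)^2)) - (lam:ℂ)^2*ω1^2),
         -(((lam:ℂ)+2*mu)*((lam:ℂ)+mu)*(ω1*ω2) - (lam:ℂ)^2*((ω1:ℂ)*ω2)), 0,
         ((lam:ℂ)+2*mu)*z,0,(lam:ℂ)*ω1],
       ![-(((lam:ℂ)+2*mu)*((lam:ℂ)+mu)*(ω1*ω2) - (lam:ℂ)^2*((ω1:ℂ)*ω2)),
         -(((lam:ℂ)+2*mu)*(((lam:ℂ)+mu)*ω2^2+(mu:ℂ)*((ω1:ℂ)^2+(ω2:ℂ)^2)) - (lam:ℂ)^2*ω2^2), 0,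
         0,((lam:ℂ)+2*mu)*z,(lam:ℂ)*ω2],
       ![0,0,0, (ω1:ℂ),(ω2:ℂ),z]] := by
    rw [Strohc, hS]
    ext i j
    fin_cases i <;> fin_cases j <;>
      norm_num [Matrix.diagonal_mul, Matrix.one_apply, Matrix.map_apply, Fin.ext_iff,
        Matrix.vecHead, Matrix.vecTail] <;>
      field_simp <;> push_cast <;> ring
  have step : ∀ X Y : ℂ, X = (mu:ℂ)^2*((lam:ℂ)+2*mu)^3*Y →
      (mu:ℂ)⁻¹*(mu:ℂ)⁻¹*((lam:ℂ)+2*mu)⁻¹*((lam:ℂ)+2*mu)⁻¹*((lam:ℂ)+2*mu)⁻¹*1*X = Y := by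
    intro X Y h
    rw [h]
    calc (mu:ℂ)⁻¹*(mu:ℂ)⁻¹*((lam:ℂ)+2*mu)⁻¹*((lam:ℂ)+2*mu)⁻¹*((lam:ℂ)+2*mu)⁻¹*1*((mu:ℂ)^2*((lam:ℂ)+2*mu)^3*Y)
        = ((mu:ℂ)⁻¹*(mu:ℂ))*((mu:ℂ)⁻¹*(mu:ℂ))*((((lam:ℂ)+2*mu)⁻¹*((lam:ℂ)+2*mu)))*((((lam:ℂ)+2*mu)⁻¹*((lam:ℂ)+2*mu)))*((((lam:ℂ)+2*mu)⁻¹*((lam:ℂ)+2*mu)))*Y := by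
          ring
      _ = Y := by rw [inv_mul_cancel₀ hmc, inv_mul_cancel₀ hac]; ring
  rw [hK, Matrix.det_mul, Matrix.det_diagonal, Fin.prod_univ_six, det_pattern]
  simp only [v0, v1, v2, v3, v4, v5]
  exact step _ _ (by ring)

/-- `det(Σ I₆ − K⁰) = (1 + Σ²)³` for all `Σ ∈ ℂ`; the characteristic polynomial of `K⁰`
is `(X² + 1)³` and the eigenvalues of `K⁰` are exactly `i` and `−i`, each with algebraic
multiplicity `3`. -/
theorem stmt10 (lam mu ω1 ω2 : ℝ) (hmu : 0 < mu) (hconv : 0 < 3 * lam + 2 * mu)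
    (hω : ω1 ^ 2 + ω2 ^ 2 = 1) :
    (∀ z : ℂ,
        Matrix.det (z • (1 : Matrix (Fin 6) (Fin 6) ℂ) - Strohc lam mu ω1 ω2)
          = (1 + z ^ 2) ^ 3) ∧
      Matrix.charpoly (Strohc lam mu ω1 ω2) = (Polynomial.X ^ 2 + 1) ^ 3 ∧
      ∀ z : ℂ,
        Matrix.det (z • (1 : Matrix (Fin 6) (Fin 6) ℂ) - Strohc lam mu ω1 ω2) = 0 ↔
          z = Complex.I ∨ z = -Complex.I := by
  have hm : mu ≠ 0 := ne_of_gt hmu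
  have ha : lam + 2*mu ≠ 0 := by nlinarith
  have hωc : ((ω1:ℂ))^2 + ((ω2:ℂ))^2 = 1 := by exact_mod_cast hω
  have h1 : ∀ z : ℂ,
      Matrix.det (z • (1 : Matrix (Fin 6) (Fin 6) ℂ) - Strohc lam mu ω1 ω2)
        = (1 + z ^ 2) ^ 3 := by
    intro z
    rw [keydet lam mu ω1 ω2 hm ha z, hωc]
  refine ⟨h1, ?_, ?_⟩
  · apply Polynomial.funext
    intro z
    have he : Polynomial.eval z (Matrix.charpoly (Strohc lam mu ω1 ω2)) =
        Matrix.det (z • (1 : Matrix (Fin 6) (Fin 6) ℂ) - Strohc lam mu ω1 ω2) := by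
      rw [Matrix.charpoly, eval_det, Matrix.matPolyEquiv_charmatrix]
      congr 1
      rw [Polynomial.eval_sub, Polynomial.eval_X, Polynomial.eval_C]
      congr 1
      ext i j
      by_cases h : i = j <;>
        simp [h, Matrix.scalar_apply, Matrix.one_apply, Matrix.diagonal_apply,
          Matrix.smul_apply]
    rw [he, h1 z]
    simp [Polynomial.eval_pow, Polynomial.eval_add, Polynomial.eval_one, Polynomial.eval_X]
    ring
  · intro z
    rw [h1 z]
    constructor
    · intro h
      have h0 : 1 + z^2 = 0 := by
        exact pow_eq_zero_iff (by norm_num) |>.mp h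
      have hfac : (z - Complex.I) * (z + Complex.I) = 0 := by
        have hI : Complex.I^2 = -1 := Complex.I_sq
        linear_combination h0 - hI
      rcases mul_eq_zero.mp hfac with h' | h'
      · left; exact sub_eq_zero.mp h'
      · right
        have := eq_neg_of_add_eq_zero_left h'
        exact this
    · rintro (rfl | rfl)
      · have : (1 : ℂ) + Complex.I ^ 2 = 0 := by
          rw [Complex.I_sq]; ring
        rw [this]; ring
      · have : (1 : ℂ) + (-Complex.I) ^ 2 = 0 := by
          rw [neg_pow, Complex.I_sq]; ring
        rw [this]; ring
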